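/- Let [X_S, X_T] ∈ ℝ^{n×(s+t)} have full column rank with t ≥ 1, let M_S be the orthogonal projection onto the complement of the column space of X_S, and let β ∈ ℝ^t with all entries satisfying |β_j| ≥ β_min > 0. Then max_{1≤i≤t} (X_i^T M_S X_T β)² ≥ λ_min(X_{S∪T}^T X_{S∪T})² · β_min², where X_i denotes the i-th column of X_T. -/

import Mathlib

open Matrix

lemma rayleigh_min {m : Type*} [Fintype m] [DecidableEq m] [Nonempty m]
    {A : Matrix m m ℝ} (hA : A.IsHermitian) (x : m → ℝ) :
    (⨅ i, hA.eigenvalues i) * (x ⬝ᵥ x) ≤ x ⬝ᵥ (A *ᵥ x) := by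
  set U : Matrix m m ℝ := (IsHermitian.eigenvectorUnitary hA : Matrix m m ℝ) with hU
  set y : m → ℝ := Uᵀ *ᵥ x with hy
  have hstar : star U = Uᵀ := by
    ext i j; simp [star_apply]
  have hUU : U * Uᵀ = 1 := by
    rw [← hstar]; exact (Matrix.mem_unitaryGroup_iff).mp (IsHermitian.eigenvectorUnitary hA).2
  have hxy : x ⬝ᵥ x = y ⬝ᵥ y := by
    rw [hy, mulVec_transpose, ← dotProduct_mulVec, ← mulVec_transpose, mulVec_mulVec, hUU,
      one_mulVec]
  have hquad : x ⬝ᵥ (A *ᵥ x) = ∑ i, hA.eigenvalues i * y i ^ 2 := by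
    conv_lhs => rw [hA.spectral_theorem, Unitary.conjStarAlgAut_apply]
    rw [hstar, ← hU]
    rw [← mulVec_mulVec, ← mulVec_mulVec, dotProduct_mulVec, ← mulVec_transpose, ← hy]
    simp only [dotProduct, mulVec_diagonal]
    refine Finset.sum_congr rfl fun i _ => ?_
    simp [RCLike.ofReal]
    ring
  rw [hquad, hxy]
  rw [dotProduct, Finset.mul_sum]
  refine Finset.sum_le_sum fun i _ => ?_
  have h1 : (⨅ j, hA.eigenvalues j) ≤ hA.eigenvalues i :=
    ciInf_le (Finite.bddBelow_range _) i
  nlinarith [sq_nonneg (y i)]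

/-- `max_i (X_iᵀ M_S X_T β)² ≥ λ_min(X_{S∪T}ᵀ X_{S∪T})² · β_min²`. -/
theorem stmt_5 {n s t : ℕ} (ht : 0 < t)
    (XS : Matrix (Fin n) (Fin s) ℝ) (XT : Matrix (Fin n) (Fin t) ℝ)
    (β : Fin t → ℝ) (βmin : ℝ) (hβmin : 0 < βmin)
    (hβ : ∀ j, βmin ≤ |β j|)
    (hS : IsUnit (XSᵀ * XS).det)
    (hfull : IsUnit ((fromCols XS XT)ᵀ * fromCols XS XT).det)
    (MS : Matrix (Fin n) (Fin n) ℝ) (hMS : MS = 1 - XS * (XSᵀ * XS)⁻¹ * XSᵀ)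
    (hG : ((fromCols XS XT)ᵀ * fromCols XS XT).IsHermitian) :
    (⨅ i, hG.eigenvalues i) ^ 2 * βmin ^ 2
      ≤ ⨆ i : Fin t, ((XT.transpose *ᵥ (MS *ᵥ (XT *ᵥ β))) i) ^ 2 := by
  haveI : Nonempty (Fin t) := ⟨⟨0, ht⟩⟩
  set A := fromCols XS XT with hA
  set lam := ⨅ i, hG.eigenvalues i with hlam
  set u : Fin n → ℝ := XT *ᵥ β with hu
  set v : Fin t → ℝ := XTᵀ *ᵥ (MS *ᵥ u) with hv
  -- MS is symmetric and idempotent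
  have hSinv : (XSᵀ * XS)⁻¹ * (XSᵀ * XS) = 1 := nonsing_inv_mul _ hS
  have hsymm : MSᵀ = MS := by
    rw [hMS]
    simp only [transpose_sub, transpose_one, transpose_mul, transpose_transpose]
    rw [transpose_nonsing_inv]
    simp only [transpose_mul, transpose_transpose, Matrix.mul_assoc]
  have hidem : MS * MS = MS := by
    rw [hMS]
    have h1 : XS * (XSᵀ * XS)⁻¹ * XSᵀ * (XS * (XSᵀ * XS)⁻¹ * XSᵀ)
        = XS * (XSᵀ * XS)⁻¹ * XSᵀ := by
      calc XS * (XSᵀ * XS)⁻¹ * XSᵀ * (XS * (XSᵀ * XS)⁻¹ * XSᵀ)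
          = XS * ((XSᵀ * XS)⁻¹ * (XSᵀ * XS) * ((XSᵀ * XS)⁻¹ * XSᵀ)) := by
            simp only [Matrix.mul_assoc]
        _ = XS * (XSᵀ * XS)⁻¹ * XSᵀ := by
            rw [hSinv, Matrix.one_mul, Matrix.mul_assoc]
    rw [Matrix.sub_mul, Matrix.mul_sub, Matrix.mul_sub, h1]
    simp only [Matrix.one_mul, Matrix.mul_one]
    abel
  -- β ⬝ᵥ v = (MS u) ⬝ᵥ (MS u)
  have hβv : β ⬝ᵥ v = (MS *ᵥ u) ⬝ᵥ (MS *ᵥ u) := by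
    have h2 : (MS *ᵥ u) ⬝ᵥ (MS *ᵥ u) = (MS *ᵥ u) ⬝ᵥ u := by
      rw [dotProduct_mulVec, ← mulVec_transpose, hsymm, mulVec_mulVec, hidem]
    rw [h2, hv, mulVec_transpose, dotProduct_comm, ← dotProduct_mulVec, ← hu,
      dotProduct_comm]
  -- MS u is in the image of A
  set α : Fin s → ℝ := -(((XSᵀ * XS)⁻¹ * XSᵀ) *ᵥ u) with hα
  set w : Fin s ⊕ Fin t → ℝ := Sum.elim α β with hw
  have hAw : A *ᵥ w = MS *ᵥ u := by
    rw [hw, hA, fromCols_mulVec_sumElim, hα, hMS]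
    simp only [mulVec_neg, mulVec_mulVec, sub_mulVec, one_mulVec, Matrix.mul_assoc]
    abel
  -- Rayleigh bound
  have hray : lam * (w ⬝ᵥ w) ≤ (MS *ᵥ u) ⬝ᵥ (MS *ᵥ u) := by
    have := rayleigh_min hG w
    rw [← hAw]
    calc lam * (w ⬝ᵥ w) ≤ w ⬝ᵥ ((Aᵀ * A) *ᵥ w) := this
      _ = (A *ᵥ w) ⬝ᵥ (A *ᵥ w) := by
          rw [← mulVec_mulVec, dotProduct_mulVec, ← mulVec_transpose, transpose_transpose]
  -- lam ≥ 0
  have hlam0 : 0 ≤ lam := by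
    have hpsd : (Aᵀ * A).PosSemidef := by
      have := posSemidef_conjTranspose_mul_self A
      simpa using this
    exact le_ciInf fun i => hpsd.eigenvalues_nonneg i
  -- w ⬝ᵥ w ≥ β ⬝ᵥ β
  have hwβ : β ⬝ᵥ β ≤ w ⬝ᵥ w := by
    rw [hw]
    simp only [dotProduct, Fintype.sum_sum_type, Sum.elim_inl, Sum.elim_inr]
    have : (0:ℝ) ≤ ∑ i : Fin s, α i * α i :=
      Finset.sum_nonneg fun i _ => mul_self_nonneg _
    linarith
  set B := ∑ j, |β j| with hB
  have hBpos : 0 < B := by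
    rw [hB]
    refine Finset.sum_pos (fun j _ => lt_of_lt_of_le hβmin (hβ j)) ⟨⟨0, ht⟩, Finset.mem_univ _⟩
  have hββ : βmin * B ≤ β ⬝ᵥ β := by
    rw [hB, dotProduct, Finset.mul_sum]
    refine Finset.sum_le_sum fun j _ => ?_
    have h1 := hβ j
    have h2 : β j * β j = |β j| * |β j| := by rw [← abs_mul_abs_self]
    nlinarith
  -- max of |v|
  obtain ⟨i0, _, hi0⟩ := Finset.exists_mem_eq_sup' (Finset.univ_nonempty (α := Fin t))
    fun i => |v i|
  set m := Finset.univ.sup' (Finset.univ_nonempty (α := Fin t)) (fun i => |v i|) with hm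
  have hvm : ∀ j, |v j| ≤ m := by
    intro j; rw [hm]; exact Finset.le_sup' (fun i => |v i|) (Finset.mem_univ j)
  have hβvle : β ⬝ᵥ v ≤ m * B := by
    rw [dotProduct, hB, Finset.mul_sum]
    refine Finset.sum_le_sum fun j _ => ?_
    calc β j * v j ≤ |β j * v j| := le_abs_self _
      _ = |v j| * |β j| := by rw [abs_mul]; ring
      _ ≤ m * |β j| := by
          exact mul_le_mul_of_nonneg_right (hvm j) (abs_nonneg _)
  have hkey : lam * βmin ≤ m := by
    have h1 : lam * (βmin * B) ≤ lam * (β ⬝ᵥ β) := by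
      exact mul_le_mul_of_nonneg_left hββ hlam0
    have h2 : lam * (β ⬝ᵥ β) ≤ lam * (w ⬝ᵥ w) := mul_le_mul_of_nonneg_left hwβ hlam0
    have h3 : lam * βmin * B ≤ m * B := by nlinarith [hβv, hray]
    exact le_of_mul_le_mul_right h3 hBpos
  have hlamb0 : 0 ≤ lam * βmin := mul_nonneg hlam0 hβmin.le
  have hsq : lam ^ 2 * βmin ^ 2 ≤ v i0 ^ 2 := by
    have : m ^ 2 = v i0 ^ 2 := by rw [hi0, sq_abs]
    nlinarith
  calc lam ^ 2 * βmin ^ 2 ≤ v i0 ^ 2 := hsq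
    _ ≤ ⨆ i : Fin t, v i ^ 2 := le_ciSup (f := fun i => v i ^ 2) (Finite.bddAbove_range _) i0
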